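/- If Φ(x) < ∞ for all x ∈ ℝ, then Φ is strictly decreasing on (−∞, μ] and strictly increasing on [μ, ∞), where μ is the median of F₀. -/

import Mathlib

open MeasureTheory Set Filter Topology ENNReal

theorem stmt_4
    (σ f₀ : ℝ → ℝ)
    (hσc : Continuous σ) (hσpos : ∀ x, 0 < σ x)
    (hf₀c : Continuous f₀) (hf₀pos : ∀ x, 0 < f₀ x)
    (hf₀int : ∫ x, f₀ x = 1)
    (F₀ : ℝ → ℝ) (hF₀ : ∀ x, F₀ x = ∫ y in Iic x, f₀ y)
    (μ : ℝ) (hμ : F₀ μ = 1 / 2)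
    (Φ : ℝ → ℝ≥0∞)
    (hΦ : ∀ x, Φ x = ∫⁻ y, ENNReal.ofReal
        (((Ioi x).indicator (fun _ => (1 : ℝ)) y - F₀ y) ^ 2 / (σ y ^ 2 * f₀ y)))
    (hΦfin : ∀ x, Φ x < ⊤) :
    StrictAntiOn Φ (Iic μ) ∧ StrictMonoOn Φ (Ici μ) := by
  set g : ℝ → ℝ → ℝ≥0∞ := fun x y => ENNReal.ofReal
      (((Ioi x).indicator (fun _ => (1 : ℝ)) y - F₀ y) ^ 2 / (σ y ^ 2 * f₀ y)) with hgdef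
  -- integrability of f₀
  have hf₀i : Integrable f₀ := by
    by_contra h
    rw [integral_undef h] at hf₀int
    norm_num at hf₀int
  have hF₀nonneg : ∀ y, 0 ≤ F₀ y := fun y => by
    rw [hF₀]
    exact setIntegral_nonneg measurableSet_Iic fun x _ => (hf₀pos x).le
  have hF₀le1 : ∀ y, F₀ y ≤ 1 := fun y => by
    rw [hF₀, ← hf₀int]
    exact setIntegral_le_integral hf₀i (ae_of_all _ fun x => (hf₀pos x).le)
  have hF₀strict : StrictMono F₀ := by
    intro a b hab
    have hsplit : F₀ b = F₀ a + ∫ y in Ioc a b, f₀ y := by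
      rw [hF₀, hF₀, ← setIntegral_union (Iic_disjoint_Ioc le_rfl) measurableSet_Ioc
        hf₀i.integrableOn hf₀i.integrableOn, Iic_union_Ioc_eq_Iic hab.le]
    have hpos : 0 < ∫ y in Ioc a b, f₀ y := by
      rw [setIntegral_pos_iff_support_of_nonneg_ae
        (ae_of_all _ fun x => (hf₀pos x).le) hf₀i.integrableOn]
      have : Function.support f₀ ∩ Ioc a b = Ioc a b := by
        apply inter_eq_self_of_subset_right
        intro x _
        exact (hf₀pos x).ne'
      rw [this, Real.volume_Ioc]
      simp [hab]
    linarith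
  -- measurability
  have hmeas : ∀ x, Measurable (g x) := by
    intro x
    apply Measurable.ennreal_ofReal
    apply Measurable.div
    · exact ((Measurable.indicator measurable_const measurableSet_Ioi).sub
        hF₀strict.monotone.measurable).pow_const 2
    · exact ((hσc.measurable.pow_const 2).mul hf₀c.measurable)
  -- split
  have hsplit : ∀ x x₁ x₂ : ℝ, x₁ < x₂ → Φ x =
      (∫⁻ y in Iic x₁, g x y) + (∫⁻ y in Ioc x₁ x₂, g x y) + ∫⁻ y in Ioi x₂, g x y := by
    intro x x₁ x₂ h12
    rw [hΦ, ← lintegral_add_compl (g x) (measurableSet_Iic (a := x₁)), compl_Iic]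
    have : (Ioi x₁ : Set ℝ) = Ioc x₁ x₂ ∪ Ioi x₂ := by
      rw [Ioc_union_Ioi_eq_Ioi h12.le]
    rw [this, lintegral_union measurableSet_Ioi Ioc_disjoint_Ioi_same, add_assoc]
  -- equal outer parts
  have hAeq : ∀ x₁ x₂ : ℝ, x₁ < x₂ →
      (∫⁻ y in Iic x₁, g x₁ y) = ∫⁻ y in Iic x₁, g x₂ y := by
    intro x₁ x₂ h12
    apply setLIntegral_congr_fun measurableSet_Iic
    intro y hy
    have h1 : y ∉ Ioi x₁ := by simpa using hy
    have h2 : y ∉ Ioi x₂ := by simp at hy ⊢; linarith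
    simp [hgdef, indicator_of_notMem h1, indicator_of_notMem h2]
  have hBeq : ∀ x₁ x₂ : ℝ, x₁ < x₂ →
      (∫⁻ y in Ioi x₂, g x₁ y) = ∫⁻ y in Ioi x₂, g x₂ y := by
    intro x₁ x₂ h12
    apply setLIntegral_congr_fun measurableSet_Ioi
    intro y hy
    have h2 : y ∈ Ioi x₂ := hy
    have h1 : y ∈ Ioi x₁ := by simp at hy ⊢; linarith
    simp [hgdef, indicator_of_mem h1, indicator_of_mem h2]
  -- reduce to middle comparison
  have hiff : ∀ x₁ x₂ : ℝ, x₁ < x₂ →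
      ((∫⁻ y in Ioc x₁ x₂, g x₁ y) < ∫⁻ y in Ioc x₁ x₂, g x₂ y → Φ x₁ < Φ x₂) := by
    intro x₁ x₂ h12 hM
    rw [hsplit x₁ x₁ x₂ h12, hsplit x₂ x₁ x₂ h12, hAeq x₁ x₂ h12, hBeq x₁ x₂ h12]
    have hA : (∫⁻ y in Iic x₁, g x₂ y) ≠ ⊤ := by
      refine ne_top_of_le_ne_top (hΦfin x₂).ne ?_
      rw [hΦ]
      exact setLIntegral_le_lintegral _ _
    have hB : (∫⁻ y in Ioi x₂, g x₂ y) ≠ ⊤ := by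
      refine ne_top_of_le_ne_top (hΦfin x₂).ne ?_
      rw [hΦ]
      exact setLIntegral_le_lintegral _ _
    rw [ENNReal.add_lt_add_iff_right hB, ENNReal.add_lt_add_iff_left hA]
    exact hM
  have hiff2 : ∀ x₁ x₂ : ℝ, x₁ < x₂ →
      ((∫⁻ y in Ioc x₁ x₂, g x₂ y) < ∫⁻ y in Ioc x₁ x₂, g x₁ y → Φ x₂ < Φ x₁) := by
    intro x₁ x₂ h12 hM
    rw [hsplit x₁ x₁ x₂ h12, hsplit x₂ x₁ x₂ h12, hAeq x₁ x₂ h12, hBeq x₁ x₂ h12]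
    have hA : (∫⁻ y in Iic x₁, g x₂ y) ≠ ⊤ := by
      refine ne_top_of_le_ne_top (hΦfin x₂).ne ?_
      rw [hΦ]
      exact setLIntegral_le_lintegral _ _
    have hB : (∫⁻ y in Ioi x₂, g x₂ y) ≠ ⊤ := by
      refine ne_top_of_le_ne_top (hΦfin x₂).ne ?_
      rw [hΦ]
      exact setLIntegral_le_lintegral _ _
    rw [ENNReal.add_lt_add_iff_right hB, ENNReal.add_lt_add_iff_left hA]
    exact hM
  -- middle integrand values
  have hval : ∀ x₁ x₂ y : ℝ, y ∈ Ioc x₁ x₂ →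
      g x₁ y = ENNReal.ofReal ((1 - F₀ y) ^ 2 / (σ y ^ 2 * f₀ y)) ∧
      g x₂ y = ENNReal.ofReal ((F₀ y) ^ 2 / (σ y ^ 2 * f₀ y)) := by
    intro x₁ x₂ y hy
    have h1 : y ∈ Ioi x₁ := hy.1
    have h2 : y ∉ Ioi x₂ := by simpa using hy.2
    constructor
    · simp [hgdef, indicator_of_mem h1]
    · simp [hgdef, indicator_of_notMem h2]
  have hDpos : ∀ y : ℝ, 0 < σ y ^ 2 * f₀ y := fun y =>
    mul_pos (pow_pos (hσpos y) 2) (hf₀pos y)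
  have hIocne : ∀ x₁ x₂ : ℝ, x₁ < x₂ → (volume : Measure ℝ) (Ioc x₁ x₂) ≠ 0 := by
    intro x₁ x₂ h12
    rw [Real.volume_Ioc]
    simp [h12]
  have hMfin : ∀ x x₁ x₂ : ℝ, (∫⁻ y in Ioc x₁ x₂, g x y) ≠ ⊤ := by
    intro x x₁ x₂
    refine ne_top_of_le_ne_top (hΦfin x).ne ?_
    rw [hΦ]
    exact setLIntegral_le_lintegral _ _
  have hne2 : ∀ x₂ : ℝ, ∀ᵐ y : ℝ, y ≠ x₂ := by
    intro x₂
    rw [ae_iff]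
    have : {a : ℝ | ¬a ≠ x₂} = {x₂} := by ext; simp
    rw [this]
    exact measure_singleton x₂
  constructor
  · -- StrictAntiOn on Iic μ
    intro a ha b hb hab
    have hb' : b ≤ μ := hb
    refine hiff2 a b hab ?_
    refine setLIntegral_strict_mono measurableSet_Ioc (hIocne a b hab) (hmeas a)
      (hMfin b a b) ?_
    filter_upwards [hne2 b] with y hyb hy
    obtain ⟨e1, e2⟩ := hval a b y hy
    rw [e1, e2]
    have hyμ : y < μ := lt_of_lt_of_le (lt_of_le_of_ne hy.2 hyb) hb'
    have hF : F₀ y < 1 / 2 := by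
      have := hF₀strict hyμ
      linarith
    have hlt : F₀ y ^ 2 < (1 - F₀ y) ^ 2 := by
      apply pow_lt_pow_left₀ _ (hF₀nonneg y) (by norm_num)
      linarith
    rw [ENNReal.ofReal_lt_ofReal_iff]
    · exact div_lt_div_of_pos_right hlt (hDpos y)
    · apply div_pos _ (hDpos y)
      apply pow_pos
      linarith
  · -- StrictMonoOn on Ici μ
    intro a ha b hb hab
    have ha' : μ ≤ a := ha
    refine hiff a b hab ?_
    refine setLIntegral_strict_mono measurableSet_Ioc (hIocne a b hab) (hmeas b)
      (hMfin a a b) ?_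
    refine ae_of_all _ fun y hy => ?_
    obtain ⟨e1, e2⟩ := hval a b y hy
    rw [e1, e2]
    have hyμ : μ < y := lt_of_le_of_lt ha' hy.1
    have hF : 1 / 2 < F₀ y := by
      have := hF₀strict hyμ
      linarith
    have hlt : (1 - F₀ y) ^ 2 < F₀ y ^ 2 := by
      apply pow_lt_pow_left₀ _ (by linarith [hF₀le1 y]) (by norm_num)
      linarith
    rw [ENNReal.ofReal_lt_ofReal_iff]
    · exact div_lt_div_of_pos_right hlt (hDpos y)
    · apply div_pos _ (hDpos y)
      apply pow_pos
      linarith
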